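/- There exists a real number a with −1 < a < 0 such that (a² − 1/2) exp(−4a) + 3a² − 2a + 1/2 = 0. -/
import Mathlib

lemma exp_cubic_le {x : ℝ} (hx : 0 ≤ x) :
    1 + x + x ^ 2 / 2 + x ^ 3 / 6 ≤ Real.exp x := by
  have h := Real.sum_le_exp_of_nonneg hx 4
  simp [Finset.sum_range_succ, Nat.factorial] at h
  nlinarith [h]

/-- Equation (49): there is a real number `a ∈ (-1, 0)` with
`(a² - 1/2)e^{-4a} + 3a² - 2a + 1/2 = 0`. -/
theorem stmt13 :
    ∃ a : ℝ, -1 < a ∧ a < 0 ∧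
      (a ^ 2 - 1 / 2) * Real.exp (-4 * a) + 3 * a ^ 2 - 2 * a + 1 / 2 = 0 := by
  set f : ℝ → ℝ := fun a => (a ^ 2 - 1 / 2) * Real.exp (-4 * a) + 3 * a ^ 2 - 2 * a + 1 / 2
    with hf
  have hc : ContinuousOn f (Set.Icc (-(1:ℝ)/2) (-1/10)) := by
    apply Continuous.continuousOn; fun_prop
  have hfa : 0 ≤ f (-(1:ℝ)/2) := by
    have h1 : Real.exp 1 < 2.7182818286 := Real.exp_one_lt_d9
    have h2 : Real.exp 2 = Real.exp 1 * Real.exp 1 := by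
      rw [← Real.exp_add]; norm_num
    have h0 : (0:ℝ) < Real.exp 1 := Real.exp_pos 1
    have : -4 * (-(1:ℝ)/2) = 2 := by norm_num
    simp only [hf, this]
    nlinarith
  have hfb : f (-(1:ℝ)/10) ≤ 0 := by
    have h1 : (1:ℝ) + 2/5 + (2/5) ^ 2 / 2 + (2/5) ^ 3 / 6 ≤ Real.exp (2/5) :=
      exp_cubic_le (by norm_num)
    have : -4 * (-(1:ℝ)/10) = 2/5 := by norm_num
    simp only [hf, this]
    nlinarith
  have hsub := intermediate_value_Icc' (by norm_num : (-(1:ℝ)/2) ≤ -1/10) hc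
  have h0 : (0:ℝ) ∈ Set.Icc (f (-1/10)) (f (-(1:ℝ)/2)) := ⟨hfb, hfa⟩
  obtain ⟨a, ha, hfa0⟩ := hsub h0
  exact ⟨a, by linarith [ha.1], by linarith [ha.2], hfa0⟩
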